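/- Let n be a positive integer, and let 𝒢 and ℋ be nonempty compact subsets of ℂ^{n×n} (with the Frobenius norm). Let (G_t)_{t≥0} and (H_t)_{t≥0} be sequences such that G_0 ∈ 𝒢 and, for every t ≥ 0: H_t ∈ ℋ satisfies ‖H_t − G_t‖_F = min_{H ∈ ℋ} ‖H − G_t‖_F, and G_{t+1} ∈ 𝒢 satisfies ‖G_{t+1} − H_t‖_F = min_{G ∈ 𝒢} ‖G − H_t‖_F. Then: (i) the sequence of pairs (G_t, H_t) has at least one accumulation point, and every accumulation point lies in 𝒢 × ℋ; (ii) the real sequence ‖G_t − H_t‖_F converges; (iii) every accumulation point (Ḡ, H̄) satisfies ‖Ḡ − H̄‖_F = lim_{t→∞} ‖G_t − H_t‖_F; and (iv) every accumulation point (Ḡ, H̄) satisfies ‖Ḡ − H̄‖_F = dist(Ḡ, ℋ) = dist(H̄, 𝒢), where dist(M, 𝒞) = min_{C ∈ 𝒞} ‖M − C‖_F. -/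

import Mathlib

open scoped Matrix
open Filter

set_option maxHeartbeats 1000000

/-- The Frobenius norm of a complex matrix: `‖A‖_F = (trace(AᴴA))^{1/2}
= (∑ᵢⱼ |Aᵢⱼ|²)^{1/2}`. -/
noncomputable def frobNorm {m n : Type*} [Fintype m] [Fintype n]
    (A : Matrix m n ℂ) : ℝ :=
  Real.sqrt (∑ i, ∑ j, ‖A i j‖ ^ 2)

/-- The Frobenius distance from a matrix `M` to a collection `C` of matrices,
`dist(M, C) = inf_{C' ∈ C} ‖M − C'‖_F` (a minimum when `C` is compact and nonempty). -/
noncomputable def distToSet {n : ℕ} (M : Matrix (Fin n) (Fin n) ℂ)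
    (C : Set (Matrix (Fin n) (Fin n) ℂ)) : ℝ :=
  sInf ((fun C' => frobNorm (M - C')) '' C)

/-- `p` is an accumulation point of the sequence of pairs `(G_t, H_t)`: some
subsequence converges to `p`. -/
def IsAccumPair {n : ℕ} (G H : ℕ → Matrix (Fin n) (Fin n) ℂ)
    (p : Matrix (Fin n) (Fin n) ℂ × Matrix (Fin n) (Fin n) ℂ) : Prop :=
  ∃ φ : ℕ → ℕ, StrictMono φ ∧
    Tendsto (fun t => (G (φ t), H (φ t))) atTop (nhds p)

lemma frobNorm_nonneg {m n : Type*} [Fintype m] [Fintype n] (A : Matrix m n ℂ) :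
    0 ≤ frobNorm A := Real.sqrt_nonneg _

lemma frobNorm_sub_comm {m n : Type*} [Fintype m] [Fintype n] (A B : Matrix m n ℂ) :
    frobNorm (A - B) = frobNorm (B - A) := by
  simp only [frobNorm, Matrix.sub_apply, norm_sub_rev]

lemma frobNorm_continuous {n : ℕ} :
    Continuous (frobNorm : Matrix (Fin n) (Fin n) ℂ → ℝ) := by
  unfold frobNorm
  apply Real.continuous_sqrt.comp
  apply continuous_finset_sum
  intro i _
  apply continuous_finset_sum
  intro j _
  exact (continuous_norm.comp (continuous_id.matrix_elem i j)).pow 2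

/-- **Global convergence of alternating projection.**  Let `𝒢, ℋ` be nonempty compact
sets of `n × n` complex matrices and let `(G_t)`, `(H_t)` be alternating-projection
iterates: `G_0 ∈ 𝒢`, each `H_t` is a Frobenius-nearest point of `ℋ` to `G_t`, and each
`G_{t+1}` is a Frobenius-nearest point of `𝒢` to `H_t`.  Then (i) the sequence of pairs
`(G_t, H_t)` has an accumulation point, and every accumulation point lies in `𝒢 × ℋ`;
(ii) `‖G_t − H_t‖_F` converges; (iii) every accumulation point `(Gbar, Hbar)` satisfies
`‖Gbar − Hbar‖_F = lim_t ‖G_t − H_t‖_F`; and (iv) every accumulation point `(Gbar, Hbar)`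
satisfies `‖Gbar − Hbar‖_F = dist(Gbar, ℋ) = dist(Hbar, 𝒢)`. -/
theorem alternating_projection_global_convergence (n : ℕ) (hn : 0 < n)
    (𝒢 ℋ : Set (Matrix (Fin n) (Fin n) ℂ))
    (h𝒢c : IsCompact 𝒢) (h𝒢ne : 𝒢.Nonempty)
    (hℋc : IsCompact ℋ) (hℋne : ℋ.Nonempty)
    (G H : ℕ → Matrix (Fin n) (Fin n) ℂ)
    (hG0 : G 0 ∈ 𝒢)
    (hHt : ∀ t, H t ∈ ℋ ∧ ∀ H' ∈ ℋ, frobNorm (H t - G t) ≤ frobNorm (H' - G t))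
    (hGt : ∀ t, G (t + 1) ∈ 𝒢 ∧
      ∀ G' ∈ 𝒢, frobNorm (G (t + 1) - H t) ≤ frobNorm (G' - H t)) :
    (∃ p, IsAccumPair G H p) ∧
    (∀ Gbar Hbar, IsAccumPair G H (Gbar, Hbar) → Gbar ∈ 𝒢 ∧ Hbar ∈ ℋ) ∧
    (∃ L : ℝ, Tendsto (fun t => frobNorm (G t - H t)) atTop (nhds L) ∧
      ∀ Gbar Hbar, IsAccumPair G H (Gbar, Hbar) → frobNorm (Gbar - Hbar) = L) ∧
    (∀ Gbar Hbar, IsAccumPair G H (Gbar, Hbar) →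
      frobNorm (Gbar - Hbar) = distToSet Gbar ℋ ∧ frobNorm (Gbar - Hbar) = distToSet Hbar 𝒢) := by
  have hGmem : ∀ t, G t ∈ 𝒢 := by
    intro t
    cases t with
    | zero => exact hG0
    | succ s => exact (hGt s).1
  have hHmem : ∀ t, H t ∈ ℋ := fun t => (hHt t).1
  set d : ℕ → ℝ := fun t => frobNorm (G t - H t) with hd
  -- key one-step inequality: d (t+1) ≤ frobNorm (G' - H t) for any G' ∈ 𝒢
  have hstep : ∀ t, ∀ G' ∈ 𝒢, d (t + 1) ≤ frobNorm (G' - H t) := by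
    intro t G' hG'
    calc d (t + 1) = frobNorm (H (t + 1) - G (t + 1)) := frobNorm_sub_comm _ _
    _ ≤ frobNorm (H t - G (t + 1)) := (hHt (t + 1)).2 (H t) (hHmem t)
    _ = frobNorm (G (t + 1) - H t) := frobNorm_sub_comm _ _
    _ ≤ frobNorm (G' - H t) := (hGt t).2 G' hG'
  have hanti : Antitone d := by
    apply antitone_nat_of_succ_le
    intro t
    calc d (t + 1) ≤ frobNorm (G t - H t) := hstep t (G t) (hGmem t)
    _ = d t := rfl
  have hbdd : BddBelow (Set.range d) := by
    refine ⟨0, ?_⟩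
    rintro x ⟨t, rfl⟩
    exact frobNorm_nonneg _
  set L : ℝ := ⨅ t, d t with hLdef
  have hL : Tendsto d atTop (nhds L) := tendsto_atTop_ciInf hanti hbdd
  have hLle : ∀ t, L ≤ d t := fun t => ciInf_le hbdd t
  -- accumulation points exist
  have hK : IsCompact (𝒢 ×ˢ ℋ) := h𝒢c.prod hℋc
  have hmemK : ∀ t, (G t, H t) ∈ 𝒢 ×ˢ ℋ := fun t => ⟨hGmem t, hHmem t⟩
  haveI : FirstCountableTopology (Matrix (Fin n) (Fin n) ℂ) :=
    inferInstanceAs (FirstCountableTopology (Fin n → Fin n → ℂ))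
  obtain ⟨p, hpK, φ₀, hφ₀, htend₀⟩ := hK.tendsto_subseq hmemK
  -- continuity helpers
  have hcont_pair : Continuous fun q : Matrix (Fin n) (Fin n) ℂ × Matrix (Fin n) (Fin n) ℂ =>
      frobNorm (q.1 - q.2) := frobNorm_continuous.comp (continuous_fst.sub continuous_snd)
  -- part (iii): every accumulation point has frobNorm diff = L
  have hiii : ∀ Gbar Hbar, IsAccumPair G H (Gbar, Hbar) → frobNorm (Gbar - Hbar) = L := by
    rintro Gbar Hbar ⟨φ, hφ, htend⟩
    have h1 : Tendsto (fun t => d (φ t)) atTop (nhds L) := hL.comp hφ.tendsto_atTop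
    have h2 : Tendsto (fun t => frobNorm (G (φ t) - H (φ t))) atTop
        (nhds (frobNorm (Gbar - Hbar))) :=
      by simpa [Function.comp_def] using (hcont_pair.tendsto (Gbar, Hbar)).comp htend
    exact tendsto_nhds_unique h2 h1
  refine ⟨⟨p, φ₀, hφ₀, htend₀⟩, ?_, ⟨L, hL, hiii⟩, ?_⟩
  · rintro Gbar Hbar ⟨φ, hφ, htend⟩
    have hGtend : Tendsto (fun t => G (φ t)) atTop (nhds Gbar) :=
      by simpa [Function.comp_def] using (continuous_fst.tendsto (Gbar, Hbar)).comp htend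
    have hHtend : Tendsto (fun t => H (φ t)) atTop (nhds Hbar) :=
      by simpa [Function.comp_def] using (continuous_snd.tendsto (Gbar, Hbar)).comp htend
    exact ⟨h𝒢c.isClosed.mem_of_tendsto hGtend (Eventually.of_forall fun t => hGmem (φ t)),
      hℋc.isClosed.mem_of_tendsto hHtend (Eventually.of_forall fun t => hHmem (φ t))⟩
  · rintro Gbar Hbar haccum
    obtain ⟨φ, hφ, htend⟩ := haccum
    have hGtend : Tendsto (fun t => G (φ t)) atTop (nhds Gbar) :=
      by simpa [Function.comp_def] using (continuous_fst.tendsto (Gbar, Hbar)).comp htend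
    have hHtend : Tendsto (fun t => H (φ t)) atTop (nhds Hbar) :=
      by simpa [Function.comp_def] using (continuous_snd.tendsto (Gbar, Hbar)).comp htend
    have hHbar : Hbar ∈ ℋ :=
      hℋc.isClosed.mem_of_tendsto hHtend (Eventually.of_forall fun t => hHmem (φ t))
    have hGbar : Gbar ∈ 𝒢 :=
      h𝒢c.isClosed.mem_of_tendsto hGtend (Eventually.of_forall fun t => hGmem (φ t))
    have hLeq : frobNorm (Gbar - Hbar) = L := hiii Gbar Hbar ⟨φ, hφ, htend⟩
    have h1 : Tendsto (fun t => d (φ t)) atTop (nhds L) := hL.comp hφ.tendsto_atTop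
    -- L is a lower bound for distances from Gbar to ℋ
    have key1 : ∀ H' ∈ ℋ, L ≤ frobNorm (Gbar - H') := by
      intro H' hH'
      have hbound : ∀ t, d (φ t) ≤ frobNorm (H' - G (φ t)) := by
        intro t
        calc d (φ t) = frobNorm (H (φ t) - G (φ t)) := frobNorm_sub_comm _ _
        _ ≤ frobNorm (H' - G (φ t)) := (hHt (φ t)).2 H' hH'
      have hrhs : Tendsto (fun t => frobNorm (H' - G (φ t))) atTop
          (nhds (frobNorm (H' - Gbar))) :=
        by simpa [Function.comp_def] using
          ((frobNorm_continuous.comp (continuous_const.sub continuous_id)).tendsto Gbar).comp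
            hGtend
      have := le_of_tendsto_of_tendsto' h1 hrhs hbound
      rwa [frobNorm_sub_comm]
    -- L is a lower bound for distances from Hbar to 𝒢
    have key2 : ∀ G' ∈ 𝒢, L ≤ frobNorm (Hbar - G') := by
      intro G' hG'
      have hbound : ∀ t, L ≤ frobNorm (G' - H (φ t)) :=
        fun t => le_trans (hLle (φ t + 1)) (hstep (φ t) G' hG')
      have hrhs : Tendsto (fun t => frobNorm (G' - H (φ t))) atTop
          (nhds (frobNorm (G' - Hbar))) :=
        by simpa [Function.comp_def] using
          ((frobNorm_continuous.comp (continuous_const.sub continuous_id)).tendsto Hbar).comp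
            hHtend
      have := ge_of_tendsto' hrhs hbound
      rwa [frobNorm_sub_comm]
    constructor
    · apply le_antisymm
      · refine le_csInf (hℋne.image _) ?_
        rintro b ⟨H', hH', rfl⟩
        rw [hLeq]
        exact key1 H' hH'
      · refine csInf_le ⟨0, ?_⟩ ⟨Hbar, hHbar, rfl⟩
        rintro x ⟨H', _, rfl⟩
        exact frobNorm_nonneg _
    · rw [frobNorm_sub_comm]
      apply le_antisymm
      · refine le_csInf (h𝒢ne.image _) ?_
        rintro b ⟨G', hG', rfl⟩
        rw [frobNorm_sub_comm, hLeq]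
        exact key2 G' hG'
      · refine csInf_le ⟨0, ?_⟩ ⟨Gbar, hGbar, rfl⟩
        rintro x ⟨G', _, rfl⟩
        exact frobNorm_nonneg _
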